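/- If V is a positive random variable with Laplace transform ψ(t) = E[exp(-tV)], and U₁, ..., U_p are i.i.d. uniform on (0,1) independent of V, then each coordinate U'_i = ψ(-log(U_i)/V) is uniformly distributed on (0,1). -/

import Mathlib

open MeasureTheory ProbabilityTheory

/-- Marshall–Olkin sampling: if `V > 0` has Laplace transform `ψ(t) = E[exp(-tV)]`
(continuous and strictly decreasing on `[0,∞)`), and `U₁, …, U_p` are i.i.d. uniform
on `(0,1)` and independent of `V`, then each coordinate `U'_i = ψ(-log(U_i)/V)` is
uniformly distributed on `(0,1)`. -/
theorem marshall_olkin_marginal_uniform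
    {Ω : Type*} [MeasurableSpace Ω] (μ : Measure Ω) [IsProbabilityMeasure μ]
    {p : ℕ} (V : Ω → ℝ) (hVmeas : Measurable V) (hVpos : ∀ ω, 0 < V ω)
    (U : Fin p → Ω → ℝ) (hUmeas : ∀ i, Measurable (U i))
    (hUlaw : ∀ i, Measure.map (U i) μ = volume.restrict (Set.Ioo (0 : ℝ) 1))
    (hindep : iIndepFun
      (fun o : Option (Fin p) => o.elim V U) μ)
    (ψ : ℝ → ℝ)
    (hψ : ∀ t : ℝ, 0 ≤ t → ψ t = ∫ ω, Real.exp (-(t * V ω)) ∂μ)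
    (hψcont : ContinuousOn ψ (Set.Ici 0))
    (hψanti : StrictAntiOn ψ (Set.Ici 0)) :
    ∀ i, Measure.map (fun ω => ψ (-(Real.log (U i ω)) / V ω)) μ
      = volume.restrict (Set.Ioo (0 : ℝ) 1) := by
  intro i
  set W : Ω → ℝ := U i with hWdef
  have hWmeas : Measurable W := hUmeas i
  have hWlaw : Measure.map W μ = volume.restrict (Set.Ioo (0 : ℝ) 1) := hUlaw i
  -- W ∈ (0,1) a.e.
  have hWae : ∀ᵐ ω ∂μ, W ω ∈ Set.Ioo (0:ℝ) 1 := by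
    have h0 : μ (W ⁻¹' (Set.Ioo (0:ℝ) 1)ᶜ) = 0 := by
      rw [← Measure.map_apply hWmeas measurableSet_Ioo.compl, hWlaw,
        Measure.restrict_apply measurableSet_Ioo.compl]
      simp
    filter_upwards [measure_eq_zero_iff_ae_notMem.1 h0] with ω hω
    simpa using hω
  -- the argument of ψ
  set g : Ω → ℝ := fun ω => -(Real.log (W ω)) / V ω with hgdef
  have hgmeas : Measurable g :=
    ((Real.measurable_log.comp hWmeas).neg).div hVmeas
  have hgpos : ∀ᵐ ω ∂μ, 0 < g ω := by
    filter_upwards [hWae] with ω hω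
    exact div_pos (neg_pos.2 (Real.log_neg hω.1 hω.2)) (hVpos ω)
  -- integrability of exp(-(t V)) for t ≥ 0
  have hint : ∀ t : ℝ, 0 ≤ t → Integrable (fun ω => Real.exp (-(t * V ω))) μ := by
    intro t ht
    refine (integrable_const (1:ℝ)).mono'
      ((hVmeas.const_mul t).neg.exp).aestronglyMeasurable ?_
    filter_upwards with ω
    rw [Real.norm_eq_abs, abs_of_pos (Real.exp_pos _)]
    exact Real.exp_le_one_iff.2 (neg_nonpos.2 (mul_nonneg ht (hVpos ω).le))
  -- ψ 0 = 1
  have hψ0 : ψ 0 = 1 := by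
    rw [hψ 0 le_rfl]
    simp
  -- ψ > 0 on [0, ∞)
  have hψpos : ∀ x : ℝ, 0 ≤ x → 0 < ψ x := by
    intro x hx
    rw [hψ x hx]
    have := (integral_pos_iff_support_of_nonneg_ae
      (Filter.Eventually.of_forall fun ω => (Real.exp_pos _).le) (hint x hx)).2
    apply this
    have : Function.support (fun ω => Real.exp (-(x * V ω))) = Set.univ := by
      ext ω; simp [Function.mem_support, (Real.exp_pos _).ne']
    rw [this]
    simp
  -- ψ (n) → 0
  have hψtend : Filter.Tendsto (fun n : ℕ => ψ n) Filter.atTop (nhds 0) := by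
    have heq : ∀ n : ℕ, ψ n = ∫ ω, Real.exp (-((n:ℝ) * V ω)) ∂μ := fun n =>
      hψ n n.cast_nonneg
    simp_rw [heq]
    have h0 : (0:ℝ) = ∫ ω, (0:ℝ) ∂μ := by simp
    rw [h0]
    refine tendsto_integral_of_dominated_convergence (fun _ => (1:ℝ))
      (fun n => ((hVmeas.const_mul _).neg.exp).aestronglyMeasurable)
      (integrable_const 1) ?_ ?_
    · intro n
      filter_upwards with ω
      rw [Real.norm_eq_abs, abs_of_pos (Real.exp_pos _)]
      exact Real.exp_le_one_iff.2
        (neg_nonpos.2 (mul_nonneg n.cast_nonneg (hVpos ω).le))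
    · filter_upwards with ω
      have hc : Filter.Tendsto (fun n : ℕ => (n:ℝ)) Filter.atTop Filter.atTop :=
        tendsto_natCast_atTop_atTop
      have h1 : Filter.Tendsto (fun n : ℕ => -((n:ℝ) * V ω)) Filter.atTop Filter.atBot :=
        Filter.tendsto_neg_atTop_atBot.comp (hc.atTop_mul_const (hVpos ω))
      exact Real.tendsto_exp_atBot.comp h1
  -- antitonicity in nonstrict form
  have hanti : ∀ x y : ℝ, 0 ≤ x → x ≤ y → ψ y ≤ ψ x := by
    intro x y hx hxy
    rcases eq_or_lt_of_le hxy with rfl | h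
    · exact le_rfl
    · exact (hψanti (Set.mem_Ici.2 hx) (Set.mem_Ici.2 (hx.trans hxy)) h).le
  -- key probability computation
  have key : ∀ t : ℝ, 0 < t →
      μ {ω | W ω ≤ Real.exp (-(t * V ω))} = ENNReal.ofReal (ψ t) := by
    intro t ht
    have hVW : IndepFun V W μ := by
      have := hindep.indepFun (i := (none : Option (Fin p))) (j := some i)
        (by simp)
      simpa using this
    have joint : μ.map (fun ω => (V ω, W ω)) = (μ.map V).prod (μ.map W) :=
      (indepFun_iff_map_prod_eq_prod_map_map hVmeas.aemeasurable
        hWmeas.aemeasurable).1 hVW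
    have hSmeas : MeasurableSet {q : ℝ × ℝ | q.2 ≤ Real.exp (-(t * q.1))} :=
      measurableSet_le measurable_snd ((measurable_fst.const_mul t).neg.exp)
    have hpre : {ω | W ω ≤ Real.exp (-(t * V ω))}
        = (fun ω => (V ω, W ω)) ⁻¹' {q : ℝ × ℝ | q.2 ≤ Real.exp (-(t * q.1))} := rfl
    rw [hpre, ← Measure.map_apply (hVmeas.prodMk hWmeas) hSmeas, joint,
      Measure.prod_apply hSmeas]
    have hVae : ∀ᵐ v ∂(μ.map V), 0 < v :=
      (ae_map_iff hVmeas.aemeasurable measurableSet_Ioi).2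
        (Filter.Eventually.of_forall hVpos)
    have hcongr : ∫⁻ v, (μ.map W) (Prod.mk v ⁻¹' {q : ℝ × ℝ | q.2 ≤ Real.exp (-(t * q.1))})
          ∂(μ.map V)
        = ∫⁻ v, ENNReal.ofReal (Real.exp (-(t * v))) ∂(μ.map V) := by
      refine lintegral_congr_ae ?_
      filter_upwards [hVae] with v hv
      have hset : Prod.mk v ⁻¹' {q : ℝ × ℝ | q.2 ≤ Real.exp (-(t * q.1))}
          = Set.Iic (Real.exp (-(t * v))) := rfl
      rw [hset, hWlaw, Measure.restrict_apply measurableSet_Iic]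
      have hlt : Real.exp (-(t * v)) < 1 :=
        Real.exp_lt_one_iff.2 (neg_neg_iff_pos.2 (mul_pos ht hv))
      have : Set.Iic (Real.exp (-(t * v))) ∩ Set.Ioo (0:ℝ) 1
          = Set.Ioc 0 (Real.exp (-(t * v))) := by
        ext x
        constructor
        · rintro ⟨hx1, hx2, hx3⟩; exact ⟨hx2, hx1⟩
        · rintro ⟨hx1, hx2⟩; exact ⟨hx2, hx1, lt_of_le_of_lt hx2 hlt⟩
      rw [this, Real.volume_Ioc]
      simp
    rw [hcongr, lintegral_map (by fun_prop) hVmeas,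
      ← ofReal_integral_eq_lintegral_ofReal (hint t ht.le)
        (Filter.Eventually.of_forall fun ω => (Real.exp_pos _).le), ← hψ t ht.le]
  -- a.e.-measurability of the map
  set f : Ω → ℝ := fun ω => ψ (-(Real.log (W ω)) / V ω) with hfdef
  have hφcont : Continuous (fun x : ℝ => ψ (max x 0)) :=
    hψcont.comp_continuous (continuous_id.max continuous_const)
      (fun x => Set.mem_Ici.2 (le_max_right _ _))
  have hfae : AEMeasurable f μ := by
    refine (hφcont.measurable.comp hgmeas).aemeasurable.congr ?_
    filter_upwards [hgpos] with ω hω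
    simp only [Function.comp]
    rw [max_eq_left hω.le]
  haveI : IsProbabilityMeasure (μ.map f) := Measure.isProbabilityMeasure_map hfae
  haveI : IsProbabilityMeasure (volume.restrict (Set.Ioo (0:ℝ) 1)) := by
    constructor
    rw [Measure.restrict_apply_univ, Real.volume_Ioo]
    simp
  refine Measure.ext_of_Iic _ _ fun a => ?_
  rw [Measure.map_apply_of_aemeasurable hfae measurableSet_Iic,
    Measure.restrict_apply measurableSet_Iic]
  rcases le_or_gt a 0 with ha0 | ha0
  · -- a ≤ 0 : both sides zero
    have hL : μ (f ⁻¹' Set.Iic a) = 0 := by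
      have hae : ∀ᵐ ω ∂μ, f ω ∉ Set.Iic a := by
        filter_upwards [hgpos] with ω hω
        simp only [Set.mem_Iic, not_le]
        exact lt_of_le_of_lt ha0 (hψpos (g ω) hω.le)
      have := ae_iff.1 hae
      simp only [Set.mem_Iic, not_not] at this
      exact this
    rw [hL]
    have : Set.Iic a ∩ Set.Ioo (0:ℝ) 1 = ∅ := by
      ext x
      simp only [Set.mem_inter_iff, Set.mem_Iic, Set.mem_Ioo, Set.mem_empty_iff_false,
        iff_false, not_and]
      intro h1 h2
      linarith
    rw [this]
    simp
  · rcases lt_or_ge a 1 with ha1 | ha1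
    · -- 0 < a < 1
      -- find t > 0 with ψ t = a
      obtain ⟨T, hT⟩ : ∃ T : ℕ, ψ T < a := by
        have := (hψtend.eventually (eventually_lt_nhds ha0)).exists
        simpa using this
      obtain ⟨t, htmem, htval⟩ : ∃ t ∈ Set.Icc (0:ℝ) T, ψ t = a := by
        have hsub := intermediate_value_Icc' (T.cast_nonneg) (hψcont.mono
          (fun x hx => Set.mem_Ici.2 hx.1))
        have : a ∈ Set.Icc (ψ (T:ℝ)) (ψ 0) := ⟨hT.le, by rw [hψ0]; exact ha1.le⟩
        obtain ⟨t, ht1, ht2⟩ := hsub this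
        exact ⟨t, ht1, ht2⟩
      have htpos : 0 < t := by
        rcases eq_or_lt_of_le htmem.1 with rfl | h
        · rw [hψ0] at htval; exact absurd htval.symm (ne_of_lt ha1)
        · exact h
      have hev : f ⁻¹' Set.Iic a =ᵐ[μ] {ω | W ω ≤ Real.exp (-(t * V ω))} := by
        refine Filter.eventuallyEq_set.2 ?_
        filter_upwards [hWae] with ω hω
        have hgω : 0 < g ω := div_pos (neg_pos.2 (Real.log_neg hω.1 hω.2)) (hVpos ω)
        have hiff1 : f ω ≤ a ↔ t ≤ g ω := by
          rw [← htval]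
          constructor
          · intro h
            by_contra hc
            push_neg at hc
            exact absurd (hψanti (Set.mem_Ici.2 hgω.le) (Set.mem_Ici.2 htpos.le) hc)
              (not_lt.2 h)
          · intro h
            exact hanti t (g ω) htpos.le h
        have hiff2 : t ≤ g ω ↔ W ω ≤ Real.exp (-(t * V ω)) := by
          have hd : t ≤ g ω ↔ t * V ω ≤ -(Real.log (W ω)) := le_div_iff₀ (hVpos ω)
          have hlog : Real.log (W ω) ≤ -(t * V ω) ↔ W ω ≤ Real.exp (-(t * V ω)) :=
            Real.log_le_iff_le_exp hω.1
          rw [hd, ← hlog]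
          constructor <;> intro h <;> linarith
        simp only [Set.mem_preimage, Set.mem_Iic, Set.mem_setOf_eq]
        exact hiff1.trans hiff2
      rw [measure_congr hev, key t htpos, htval]
      have : Set.Iic a ∩ Set.Ioo (0:ℝ) 1 = Set.Ioc 0 a := by
        ext x
        constructor
        · rintro ⟨h1, h2, h3⟩; exact ⟨h2, h1⟩
        · rintro ⟨h1, h2⟩; exact ⟨h2, h1, lt_of_le_of_lt h2 ha1⟩
      rw [this, Real.volume_Ioc]
      simp
    · -- 1 ≤ a
      have hev : f ⁻¹' Set.Iic a =ᵐ[μ] (Set.univ : Set Ω) := by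
        rw [Filter.eventuallyEq_univ]
        filter_upwards [hgpos] with ω hω
        have : ψ (g ω) ≤ ψ 0 := hanti 0 (g ω) le_rfl hω.le
        have : f ω ≤ a := by
          rw [hψ0] at this
          calc f ω = ψ (g ω) := rfl
          _ ≤ 1 := this
          _ ≤ a := ha1
        exact this
      rw [measure_congr hev, measure_univ]
      have : Set.Iic a ∩ Set.Ioo (0:ℝ) 1 = Set.Ioo (0:ℝ) 1 := by
        ext x
        constructor
        · rintro ⟨h1, h2, h3⟩; exact ⟨h2, h3⟩
        · rintro ⟨h1, h2⟩; exact ⟨le_of_lt (lt_of_lt_of_le h2 ha1), h1, h2⟩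
      rw [this, Real.volume_Ioo]
      simp
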